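/- For every r ≥ 2 and sufficiently large n, f(n, r) ≥ r^⌈n/2⌉ and f(n, r) ≥ (r · ⌊r²/4⌋)^⌊n/4⌋, where f(n,r) is the maximum over A ⊆ {1,...,n} of the number of r-colourings of A with no monochromatic Schur triple. -/
import Mathlib

open Finset

private lemma schur_floor_sq (r : ℕ) : r ^ 2 / 4 = (r / 2) * ((r + 1) / 2) := by
  rcases Nat.even_or_odd r with ⟨s, hs⟩ | ⟨s, hs⟩
  · have hr : r = 2 * s := by omega
    subst hr
    have e1 : (2 * s) ^ 2 = 4 * (s * s) := by ring
    rw [e1, Nat.mul_div_cancel_left _ (by norm_num)]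
    have e2 : 2 * s / 2 = s := by omega
    have e3 : (2 * s + 1) / 2 = s := by omega
    rw [e2, e3]
  · have hr : r = 2 * s + 1 := by omega
    subst hr
    have e1 : (2 * s + 1) ^ 2 = 4 * (s * s + s) + 1 := by ring
    have e2 : (2 * s + 1) / 2 = s := by omega
    have e3 : (2 * s + 1 + 1) / 2 = s + 1 := by omega
    rw [e1, e2, e3]
    have e4 : s * (s + 1) = s * s + s := by ring
    rw [e4]
    generalize s * s + s = t
    omega

private def schurg (r L w : ℕ) : ℕ :=
  if w % 2 = 0 then (r + 1) / 2 else if w ≤ L then r / 2 else r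

private lemma schur_count_ge (r : ℕ) (A : Finset ℕ) (S : A → Finset (Fin r))
    (hval : ∀ σ : A → Fin r, (∀ x, σ x ∈ S x) →
      ∀ x y z : A, σ x = σ y → σ y = σ z → (x : ℕ) + (y : ℕ) ≠ (z : ℕ)) :
    ∏ x : A, (S x).card ≤
      (Finset.univ.filter (fun σ : A → Fin r =>
        ∀ x y z : A, σ x = σ y → σ y = σ z → (x : ℕ) + (y : ℕ) ≠ (z : ℕ))).card := by
  rw [← Fintype.card_piFinset]
  apply Finset.card_le_card
  intro σ hσ
  simp only [Finset.mem_filter, Finset.mem_univ, true_and]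
  exact hval σ (fun x => Fintype.mem_piFinset.1 hσ x)

theorem f_lower_bounds (r : ℕ) (hr : 2 ≤ r) :
    ∃ N : ℕ, ∀ n ≥ N,
      r ^ ((n + 1) / 2) ≤
        (Finset.Icc 1 n).powerset.sup (fun A =>
          (Finset.univ.filter (fun σ : A → Fin r =>
            ∀ x y z : A, σ x = σ y → σ y = σ z → (x : ℕ) + (y : ℕ) ≠ (z : ℕ))).card) ∧
      (r * (r ^ 2 / 4)) ^ (n / 4) ≤
        (Finset.Icc 1 n).powerset.sup (fun A =>
          (Finset.univ.filter (fun σ : A → Fin r =>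
            ∀ x y z : A, σ x = σ y → σ y = σ z → (x : ℕ) + (y : ℕ) ≠ (z : ℕ))).card) := by
  refine ⟨100, fun n hn => ?_⟩
  constructor
  · -- First bound : take A = odds in [1,n]
    set A : Finset ℕ := (Finset.range ((n + 1) / 2)).image (fun k => 2 * k + 1) with hAdef
    have hAsub : A ⊆ Finset.Icc 1 n := by
      intro w hw
      simp only [hAdef, Finset.mem_image, Finset.mem_range] at hw
      obtain ⟨k, hk, rfl⟩ := hw
      simp only [Finset.mem_Icc]
      omega
    refine le_trans ?_ (Finset.le_sup (Finset.mem_powerset.2 hAsub))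
    have hodd : ∀ w ∈ A, w % 2 = 1 := by
      intro w hw
      simp only [hAdef, Finset.mem_image, Finset.mem_range] at hw
      obtain ⟨k, hk, rfl⟩ := hw
      omega
    have hcard : A.card = (n + 1) / 2 := by
      rw [hAdef, Finset.card_image_of_injective _ (fun a b h => by omega),
        Finset.card_range]
    calc r ^ ((n + 1) / 2)
        = ∏ _x : A, ((Finset.univ : Finset (Fin r))).card := by
          simp [hcard]
      _ ≤ _ := by
          apply schur_count_ge
          intro σ _ x y z _ _ hsum
          have h1 := hodd x x.2
          have h2 := hodd y y.2
          have h3 := hodd z z.2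
          omega
  · -- Second bound
    set m := n / 4 with hm
    set L := n / 2 with hL
    set B1 : Finset ℕ := (Finset.range m).image (fun k => 2 * k + 1) with hB1
    set B2 : Finset ℕ := (Finset.range m).image (fun k => 2 * (n / 2 / 2 + 1 + k)) with hB2
    set B3 : Finset ℕ := (Finset.range m).image (fun k => 2 * ((n / 2 + 1) / 2 + k) + 1) with hB3
    set A : Finset ℕ := B1 ∪ B2 ∪ B3 with hAdef
    -- basic facts about elements of A
    have hfacts : ∀ w ∈ A, (1 ≤ w ∧ w ≤ n) ∧ (w % 2 = 0 → L < w) ∧ (w ≤ L → w % 2 = 1) := by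
      intro w hw
      simp only [hAdef, hB1, hB2, hB3, Finset.mem_union, Finset.mem_image,
        Finset.mem_range] at hw
      rcases hw with (⟨k, hk, rfl⟩ | ⟨k, hk, rfl⟩) | ⟨k, hk, rfl⟩ <;> omega
    have hAsub : A ⊆ Finset.Icc 1 n := by
      intro w hw
      have := (hfacts w hw).1
      simp only [Finset.mem_Icc]
      omega
    refine le_trans ?_ (Finset.le_sup (Finset.mem_powerset.2 hAsub))
    have hp : r / 2 < r := by omega
    set S : A → Finset (Fin r) := fun x =>
      if (x : ℕ) % 2 = 0 then Finset.Ici (⟨r / 2, hp⟩ : Fin r)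
      else if (x : ℕ) ≤ L then Finset.Iio (⟨r / 2, hp⟩ : Fin r) else Finset.univ with hSdef
    -- compute the product
    have hScard : ∀ x : A, (S x).card = schurg r L (x : ℕ) := by
      intro x
      simp only [hSdef, schurg]
      split_ifs with h1 h2
      · rw [Fin.card_Ici]
        show r - r / 2 = (r + 1) / 2
        omega
      · rw [Fin.card_Iio]
      · rw [Finset.card_univ, Fintype.card_fin]
    have hd12 : Disjoint B1 B2 := by
      rw [Finset.disjoint_left]
      intro w hw1 hw2
      simp only [hB1, hB2, Finset.mem_image, Finset.mem_range] at hw1 hw2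
      obtain ⟨k, hk, rfl⟩ := hw1
      obtain ⟨j, hj, he⟩ := hw2
      omega
    have hd3 : Disjoint (B1 ∪ B2) B3 := by
      rw [Finset.disjoint_left]
      intro w hw1 hw2
      simp only [hB1, hB2, hB3, Finset.mem_union, Finset.mem_image, Finset.mem_range] at hw1 hw2
      obtain ⟨j, hj, he⟩ := hw2
      rcases hw1 with ⟨k, hk, rfl⟩ | ⟨k, hk, rfl⟩ <;> omega
    have hinj1 : ∀ a ∈ Finset.range m, ∀ b ∈ Finset.range m,
        2 * a + 1 = 2 * b + 1 → a = b := fun a _ b _ h => by omega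
    have hinj2 : ∀ a ∈ Finset.range m, ∀ b ∈ Finset.range m,
        2 * (n / 2 / 2 + 1 + a) = 2 * (n / 2 / 2 + 1 + b) → a = b := fun a _ b _ h => by omega
    have hinj3 : ∀ a ∈ Finset.range m, ∀ b ∈ Finset.range m,
        2 * ((n / 2 + 1) / 2 + a) + 1 = 2 * ((n / 2 + 1) / 2 + b) + 1 → a = b :=
      fun a _ b _ h => by omega
    have p1 : ∏ w ∈ B1, schurg r L w = (r / 2) ^ m := by
      rw [hB1, Finset.prod_image hinj1]
      calc ∏ k ∈ Finset.range m, schurg r L (2 * k + 1)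
          = ∏ _k ∈ Finset.range m, (r / 2) := by
            apply Finset.prod_congr rfl
            intro k hk
            have hk' := Finset.mem_range.1 hk
            simp only [schurg]
            rw [if_neg (by omega), if_pos (by omega)]
        _ = (r / 2) ^ m := by rw [Finset.prod_const, Finset.card_range]
    have p2 : ∏ w ∈ B2, schurg r L w = ((r + 1) / 2) ^ m := by
      rw [hB2, Finset.prod_image hinj2]
      calc ∏ k ∈ Finset.range m, schurg r L (2 * (n / 2 / 2 + 1 + k))
          = ∏ _k ∈ Finset.range m, ((r + 1) / 2) := by
            apply Finset.prod_congr rfl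
            intro k hk
            simp only [schurg]
            rw [if_pos (by omega)]
        _ = ((r + 1) / 2) ^ m := by rw [Finset.prod_const, Finset.card_range]
    have p3 : ∏ w ∈ B3, schurg r L w = r ^ m := by
      rw [hB3, Finset.prod_image hinj3]
      calc ∏ k ∈ Finset.range m, schurg r L (2 * ((n / 2 + 1) / 2 + k) + 1)
          = ∏ _k ∈ Finset.range m, r := by
            apply Finset.prod_congr rfl
            intro k hk
            have hk' := Finset.mem_range.1 hk
            simp only [schurg]
            rw [if_neg (by omega), if_neg (by omega)]
        _ = r ^ m := by rw [Finset.prod_const, Finset.card_range]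
    have hprod : ∏ x : A, (S x).card = (r / 2) ^ m * ((r + 1) / 2) ^ m * r ^ m := by
      calc ∏ x : A, (S x).card
          = ∏ x : A, schurg r L (x : ℕ) := Finset.prod_congr rfl (fun x _ => hScard x)
        _ = ∏ w ∈ A, schurg r L w := Finset.prod_coe_sort A (schurg r L)
        _ = (r / 2) ^ m * ((r + 1) / 2) ^ m * r ^ m := by
            rw [hAdef, Finset.prod_union hd3, Finset.prod_union hd12, p1, p2, p3]
    have key : ∏ x : A, (S x).card ≤
        (Finset.univ.filter (fun σ : A → Fin r =>
          ∀ x y z : A, σ x = σ y → σ y = σ z → (x : ℕ) + (y : ℕ) ≠ (z : ℕ))).card := by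
      apply schur_count_ge
      intro σ hσ x y z hxy hyz hsum
      by_cases hc : (σ x : ℕ) < r / 2
      · -- all of x, y, z must be odd
        have ho : ∀ w : A, σ w = σ x → (w : ℕ) % 2 = 1 := by
          intro w hw
          by_contra hodd
          have heven : (w : ℕ) % 2 = 0 := by omega
          have hw' := hσ w
          simp only [hSdef] at hw'
          rw [if_pos heven, Finset.mem_Ici, Fin.le_def] at hw'
          rw [hw] at hw'
          have h2 : r / 2 ≤ (σ x : ℕ) := hw'
          omega
        have h1 := ho x rfl
        have h2 := ho y hxy.symm
        have h3 := ho z (hyz.symm.trans hxy.symm)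
        omega
      · -- x and y must be large
        have hlarge : ∀ w : A, σ w = σ x → L < (w : ℕ) := by
          intro w hw
          by_contra h
          push_neg at h
          have hodd := (hfacts w w.2).2.2 h
          have hw' := hσ w
          simp only [hSdef] at hw'
          rw [if_neg (by omega), if_pos h, Finset.mem_Iio, Fin.lt_def] at hw'
          rw [hw] at hw'
          have h2 : (σ x : ℕ) < r / 2 := hw'
          omega
        have h1 := hlarge x rfl
        have h2 := hlarge y hxy.symm
        have h3 : (z : ℕ) ≤ n := (hfacts z z.2).1.2
        omega
    refine le_trans (le_of_eq ?_) key
    rw [hprod, schur_floor_sq, mul_pow, mul_pow]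
    ring
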